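/- Let Y be a finite type and let W : Fin 2 → Y → ℝ be a binary-input channel: W u y ≥ 0 for all u, y, and Σ_{y ∈ Y} W u y = 1 for each u ∈ Fin 2. Define the minus-channel W⁻ : Fin 2 → (Y × Y) → ℝ by W⁻ u₁ (y₁, y₂) = (1/2) · Σ_{u₂ ∈ Fin 2} W (u₁ + u₂) y₁ · W u₂ y₂ (addition of inputs in Fin 2 = ZMod 2). Then the Bhattacharyya parameter satisfies Z(W⁻) ≤ 2·Z(W) − Z(W)², where Z(W) = Σ_{y ∈ Y} √(W 0 y · W 1 y) and Z(W⁻) = Σ_{(y₁,y₂)} √(W⁻ 0 (y₁,y₂) · W⁻ 1 (y₁,y₂)). -/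
import Mathlib


/-- The Bhattacharyya parameter of a binary-input channel kernel on a finite
output alphabet. -/
noncomputable def bhattacharyya {Y : Type*} [Fintype Y] (W : Fin 2 → Y → ℝ) : ℝ :=
  ∑ y : Y, Real.sqrt (W 0 y * W 1 y)

/-- Arıkan's minus-channel `W⁻ = W ⊞ W`, with output alphabet `Y × Y` and
`W⁻ u₁ (y₁, y₂) = (1/2) ⬝ Σ_{u₂} W (u₁ + u₂) y₁ ⬝ W u₂ y₂` (input addition mod 2). -/
noncomputable def minusChannel {Y : Type*} (W : Fin 2 → Y → ℝ) : Fin 2 → Y × Y → ℝ :=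
  fun u₁ p => (1 / 2) * ∑ u₂ : Fin 2, W (u₁ + u₂) p.1 * W u₂ p.2

lemma sqrt_key (a b c d : ℝ) (ha : 0 ≤ a) (hb : 0 ≤ b) (hc : 0 ≤ c) (hd : 0 ≤ d) :
    Real.sqrt ((a*c + b*d) * (a*d + b*c)) ≤
      (a+b) * Real.sqrt (c*d) + (c+d) * Real.sqrt (a*b)
        - 2 * Real.sqrt (a*b) * Real.sqrt (c*d) := by
  set s := Real.sqrt (a*b) with hs
  set t := Real.sqrt (c*d) with ht
  have hs0 : 0 ≤ s := Real.sqrt_nonneg _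
  have ht0 : 0 ≤ t := Real.sqrt_nonneg _
  have hs2 : s^2 = a*b := Real.sq_sqrt (mul_nonneg ha hb)
  have ht2 : t^2 = c*d := Real.sq_sqrt (mul_nonneg hc hd)
  have hab : 2*s ≤ a + b := by nlinarith [sq_nonneg (a-b)]
  have hcd : 2*t ≤ c + d := by nlinarith [sq_nonneg (c-d)]
  have hR : 0 ≤ (a+b)*t + (c+d)*s - 2*s*t := by
    nlinarith [mul_le_mul_of_nonneg_right hab ht0, mul_le_mul_of_nonneg_right hcd hs0,
      mul_nonneg hs0 ht0]
  have hid : ((a+b)*t + (c+d)*s - 2*s*t)^2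
      = (a*c+b*d)*(a*d+b*c) + 2*(s*t)*((a+b-2*s)*(c+d-2*t)) := by
    linear_combination (a^2+b^2-2*s^2) * ht2 + (c^2+d^2-2*t^2) * hs2
  have hle : (a*c+b*d)*(a*d+b*c) ≤ ((a+b)*t + (c+d)*s - 2*s*t)^2 := by
    nlinarith [hid, mul_nonneg (mul_nonneg hs0 ht0)
      (mul_nonneg (by linarith : (0:ℝ) ≤ a+b-2*s) (by linarith : (0:ℝ) ≤ c+d-2*t))]
  calc Real.sqrt ((a*c + b*d) * (a*d + b*c))
      ≤ Real.sqrt (((a+b)*t + (c+d)*s - 2*s*t)^2) := Real.sqrt_le_sqrt hle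
    _ = (a+b)*t + (c+d)*s - 2*s*t := Real.sqrt_sq hR

/-- `Z(W⁻) ≤ 2 Z(W) − Z(W)²`. -/
theorem bhattacharyya_minusChannel_le {Y : Type*} [Fintype Y] (W : Fin 2 → Y → ℝ)
    (hW : ∀ u y, 0 ≤ W u y) (hW1 : ∀ u : Fin 2, ∑ y : Y, W u y = 1) :
    bhattacharyya (minusChannel W) ≤
      2 * bhattacharyya W - (bhattacharyya W) ^ 2 := by
  set g : Y → ℝ := fun y => Real.sqrt (W 0 y * W 1 y) with hg
  set Z : ℝ := bhattacharyya W with hZ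
  have hZg : Z = ∑ y : Y, g y := rfl
  have step1 : bhattacharyya (minusChannel W)
      = ∑ y1 : Y, ∑ y2 : Y,
          Real.sqrt (minusChannel W 0 (y1, y2) * minusChannel W 1 (y1, y2)) := by
    rw [bhattacharyya, Fintype.sum_prod_type]
  have step2 : ∀ y1 y2 : Y,
      Real.sqrt (minusChannel W 0 (y1, y2) * minusChannel W 1 (y1, y2))
        ≤ (1/2) * ((W 0 y1 + W 1 y1) * g y2 + (W 0 y2 + W 1 y2) * g y1
            - 2 * g y1 * g y2) := by
    intro y1 y2
    have hval : minusChannel W 0 (y1, y2) * minusChannel W 1 (y1, y2)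
        = (1/2)^2 * ((W 0 y1 * W 0 y2 + W 1 y1 * W 1 y2)
            * (W 0 y1 * W 1 y2 + W 1 y1 * W 0 y2)) := by
      simp only [minusChannel, Fin.sum_univ_two, show (0+0:Fin 2)=0 from rfl,
        show (0+1:Fin 2)=1 from rfl, show (1+0:Fin 2)=1 from rfl,
        show (1+1:Fin 2)=0 from rfl]
      ring
    rw [hval, Real.sqrt_mul (by positivity), Real.sqrt_sq (by norm_num)]
    have := sqrt_key (W 0 y1) (W 1 y1) (W 0 y2) (W 1 y2)
      (hW 0 y1) (hW 1 y1) (hW 0 y2) (hW 1 y2)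
    simp only [hg]
    nlinarith [this]
  have step3 : ∀ y1 : Y, ∑ y2 : Y,
      (1/2) * ((W 0 y1 + W 1 y1) * g y2 + (W 0 y2 + W 1 y2) * g y1 - 2 * g y1 * g y2)
      = (1/2) * ((W 0 y1 + W 1 y1) * Z + 2 * g y1 - 2 * g y1 * Z) := by
    intro y1
    rw [← Finset.mul_sum]
    congr 1
    rw [Finset.sum_sub_distrib, Finset.sum_add_distrib, ← Finset.mul_sum, ← hZg]
    congr 2
    · have hsum2 : ∑ y2 : Y, (W 0 y2 + W 1 y2) = 2 := by
        rw [Finset.sum_add_distrib, hW1 0, hW1 1]; norm_num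
      rw [← Finset.sum_mul, hsum2]
    · rw [← Finset.mul_sum, ← hZg]
  have step4 : ∑ y1 : Y, (1/2) * ((W 0 y1 + W 1 y1) * Z + 2 * g y1 - 2 * g y1 * Z)
      = 2 * Z - Z^2 := by
    rw [← Finset.mul_sum, Finset.sum_sub_distrib, Finset.sum_add_distrib]
    have h1 : ∑ y1 : Y, (W 0 y1 + W 1 y1) * Z = 2 * Z := by
      rw [← Finset.sum_mul, Finset.sum_add_distrib, hW1 0, hW1 1]; norm_num
    have h2 : ∑ y1 : Y, 2 * g y1 = 2 * Z := by rw [← Finset.mul_sum, ← hZg]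
    have h3 : ∑ y1 : Y, 2 * g y1 * Z = 2 * Z * Z := by
      rw [← Finset.sum_mul, ← Finset.mul_sum, ← hZg]
    rw [h1, h2, h3]; ring
  calc bhattacharyya (minusChannel W)
      = ∑ y1 : Y, ∑ y2 : Y,
          Real.sqrt (minusChannel W 0 (y1, y2) * minusChannel W 1 (y1, y2)) := step1
    _ ≤ ∑ y1 : Y, ∑ y2 : Y, (1/2) * ((W 0 y1 + W 1 y1) * g y2
          + (W 0 y2 + W 1 y2) * g y1 - 2 * g y1 * g y2) :=
        Finset.sum_le_sum fun y1 _ => Finset.sum_le_sum fun y2 _ => step2 y1 y2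
    _ = ∑ y1 : Y, (1/2) * ((W 0 y1 + W 1 y1) * Z + 2 * g y1 - 2 * g y1 * Z) := by
        exact Finset.sum_congr rfl fun y1 _ => step3 y1
    _ = 2 * Z - Z^2 := step4
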